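/- Let S = ℂ[y₀, y₁, y₂, y₃] be the polynomial ring, graded by ℤ² with deg y₀ = (0,1), deg y₁ = (1,0), deg y₂ = (0,1), and deg y₃ = (1,1). Let M be any ℤ²-graded S-module (so y_i·M_d ⊆ M_{d + deg y_i} for all degrees d) such that M_{(a,b)} is a one-dimensional ℂ-vector space for every (a,b) ∈ ℕ² and M_{(a,b)} = 0 for all other (a,b) ∈ ℤ², and such that multiplication by y₁ is zero on M. Then M is not finitely generated as an S-module. (This is the claim of Example 1.4 of the paper: the module Γ_*(F) of the structure sheaf of a torus-fixed point on the (−1)-curve of the first Hirzebruch surface is not finitely generated over the Cox ring.) -/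

import Mathlib

open MvPolynomial

/-- The degrees of the variables `y₀, y₁, y₂, y₃` of the Cox ring of the first Hirzebruch
surface: `deg y₀ = (0,1)`, `deg y₁ = (1,0)`, `deg y₂ = (0,1)`, `deg y₃ = (1,1)`. -/
def hirzebruchDeg : Fin 4 → ℤ × ℤ := ![(0, 1), (1, 0), (0, 1), (1, 1)]

/-- Example 1.4: let `S = ℂ[y₀, y₁, y₂, y₃]` be graded by `ℤ²` with
`deg y₀ = (0,1)`, `deg y₁ = (1,0)`, `deg y₂ = (0,1)`, `deg y₃ = (1,1)`.  If `M` is a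
`ℤ²`-graded `S`-module whose graded piece `M_{(a,b)}` is a one-dimensional `ℂ`-vector
space for every `(a,b) ∈ ℕ²` and zero otherwise, and on which multiplication by `y₁`
is zero, then `M` is not a finitely generated `S`-module. -/
lemma hdeg : ∀ i : Fin 4, i ≠ 1 → 1 ≤ (hirzebruchDeg i).2 := by decide

theorem stmt13 (M : Type) [AddCommGroup M]
    [Module (MvPolynomial (Fin 4) ℂ) M] [Module ℂ M]
    [IsScalarTower ℂ (MvPolynomial (Fin 4) ℂ) M]
    (grade : ℤ × ℤ → Submodule ℂ M)
    (hdirect : DirectSum.IsInternal grade)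
    (hcompat : ∀ (i : Fin 4) (d : ℤ × ℤ), ∀ m ∈ grade d,
      (X i : MvPolynomial (Fin 4) ℂ) • m ∈ grade (d + hirzebruchDeg i))
    (hrank : ∀ a b : ℤ, 0 ≤ a → 0 ≤ b → Module.rank ℂ ↥(grade (a, b)) = 1)
    (hzero : ∀ a b : ℤ, ¬(0 ≤ a ∧ 0 ≤ b) → grade (a, b) = ⊥)
    (hy1 : ∀ m : M, (X 1 : MvPolynomial (Fin 4) ℂ) • m = 0) :
    ¬ Module.Finite (MvPolynomial (Fin 4) ℂ) M := by
  classical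
  intro hfin
  set S := MvPolynomial (Fin 4) ℂ with hS
  let e : (DirectSum (ℤ × ℤ) fun d => ↥(grade d)) ≃ₗ[ℂ] M := LinearEquiv.ofBijective (DirectSum.coeLinearMap grade) hdirect
  let π : (ℤ × ℤ) → M → M := fun d m => ((e.symm m) d : M)
  have π_add : ∀ d x y, π d (x + y) = π d x + π d y := by
    intro d x y
    simp [π, map_add]
  have π_mem_same : ∀ d (x : M), x ∈ grade d → π d x = x := by
    intro d x hx
    simp [π, e, hdirect.ofBijective_coeLinearMap_of_mem hx]
  have π_mem_ne : ∀ d d' (x : M), x ∈ grade d → d ≠ d' → π d' x = 0 := by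
    intro d d' x hx hne
    simp [π, e, hdirect.ofBijective_coeLinearMap_of_mem_ne hne hx]
  have π_zero : ∀ d, π d (0 : M) = 0 := by
    intro d; simp [π]
  -- Lemma C : components in degree (a, 0) of X i • m all vanish
  have lemC : ∀ (i : Fin 4) (a : ℤ) (m : M), π (a, 0) ((X i : S) • m) = 0 := by
    intro i a m
    have hm : (DirectSum.coeLinearMap grade) (e.symm m) = m := e.apply_symm_apply m
    rw [← hm]
    generalize e.symm m = w
    induction w using DirectSum.induction_on with
    | zero => rw [map_zero, smul_zero]; exact π_zero _
    | of d x =>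
      rw [DirectSum.coeLinearMap_of]
      by_cases hi : i = 1
      · subst hi; rw [hy1]; exact π_zero _
      · by_cases hd : 0 ≤ d.1 ∧ 0 ≤ d.2
        · have hmem : (X i : S) • (x : M) ∈ grade (d + hirzebruchDeg i) :=
            hcompat i d x x.2
          refine π_mem_ne _ _ _ hmem ?_
          have h2 : 1 ≤ (hirzebruchDeg i).2 := hdeg i hi
          intro hcontra
          have : d.2 + (hirzebruchDeg i).2 = 0 := congrArg Prod.snd hcontra
          omega
        · have hb : grade d = ⊥ := by
            have h := hzero d.1 d.2 hd
            rwa [Prod.mk.eta] at h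
          have hx0 : (x : M) = 0 := (Submodule.eq_bot_iff _).mp hb _ x.2
          rw [hx0, smul_zero]; exact π_zero _
    | add x y hx hy =>
      rw [map_add, smul_add, π_add, hx, hy, add_zero]
  -- Lemma D
  have lemD : ∀ (a : ℤ) (p : S) (m : M),
      π (a, 0) (p • m) = constantCoeff p • π (a, 0) m := by
    intro a p
    induction p using MvPolynomial.induction_on with
    | C c =>
      intro m
      rw [show (C c : S) = algebraMap ℂ S c from rfl, algebraMap_smul]
      have hc : constantCoeff ((algebraMap ℂ S) c) = c := MvPolynomial.constantCoeff_C _ c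
      simp [π, map_smul, DirectSum.smul_apply, hc]
    | add p q hp hq =>
      intro m
      rw [add_smul, π_add, hp, hq, map_add, add_smul]
    | mul_X p i hp =>
      intro m
      rw [mul_smul, hp, lemC, smul_zero, map_mul, constantCoeff_X, mul_zero, zero_smul]
  -- choose a beyond all generator degrees
  obtain ⟨s, hs⟩ := hfin.fg_top
  let T : Finset ℤ := s.sup fun m => (e.symm m).support.image Prod.fst
  let a : ℤ := (insert 0 T).max' (Finset.insert_nonempty _ _) + 1
  have ha0 : 0 ≤ a := by
    have := Finset.le_max' (insert 0 T) 0 (Finset.mem_insert_self _ _)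
    omega
  have haT : ∀ x ∈ T, x < a := by
    intro x hx
    have := Finset.le_max' (insert 0 T) x (Finset.mem_insert_of_mem hx)
    omega
  have hgen : ∀ m ∈ s, π (a, 0) m = 0 := by
    intro m hm
    have hnot : (a, 0) ∉ (e.symm m).support := by
      intro hmem
      have hsub : (e.symm m).support.image Prod.fst ⊆ T :=
        Finset.le_sup (f := fun m => (e.symm m).support.image Prod.fst) hm
      have : a ∈ T := hsub (Finset.mem_image_of_mem Prod.fst hmem)
      exact absurd (haT a this) (lt_irrefl a)
    simp [π, DFinsupp.notMem_support_iff.mp hnot]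
  -- nonzero element in grade (a, 0)
  have hpos : 0 < Module.rank ℂ (grade (a, 0)) := by
    rw [hrank a 0 ha0 le_rfl]; exact zero_lt_one
  obtain ⟨v, hv⟩ := rank_pos_iff_exists_ne_zero.mp hpos
  have hvzero : π (a, 0) (v : M) = 0 := by
    have hvmem : (v : M) ∈ Submodule.span S (s : Set M) := by
      rw [hs]; trivial
    refine Submodule.span_induction ?_ ?_ ?_ ?_ hvmem
    · intro x hx; exact hgen x hx
    · exact π_zero _
    · intro x y _ _ hx hy; rw [π_add, hx, hy, add_zero]
    · intro p x _ hx; rw [lemD, hx, smul_zero]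
  have hsame := π_mem_same (a, 0) (v : M) v.2
  rw [hvzero] at hsame
  exact hv (Submodule.coe_eq_zero.mp hsame.symm)
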